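/- Main-factorization identity for the α-coefficients at λ = 2N − k − (n−1)/2 (used in the proof of Theorem 5.6/MainFactEven1): for every natural number n ≥ 2, all natural numbers N ≥ 1 and k with 1 ≤ k ≤ N, and every i with 0 ≤ i ≤ N: if i > N−k then α_i^{(N)}(2N − k − (n−1)/2) = 0, and if i ≤ N−k then α_i^{(N)}(2N − k − (n−1)/2) = α_i^{(N−k)}(2N − k − (n−1)/2). -/

import Mathlib

open Finset Polynomial

noncomputable def aC (n N j : ℕ) (l : ℂ) : ℂ :=
  (-2 : ℂ) ^ (N - j) *
    ((N.factorial : ℂ) / ((j.factorial : ℂ) * ((2 * N - 2 * j).factorial : ℂ))) *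
    ∏ k ∈ Finset.Ico j N, (2 * l - 4 * (N : ℂ) + 2 * (k : ℂ) + (n : ℂ) + 1)

noncomputable def bC (n N j : ℕ) (l : ℂ) : ℂ :=
  (-2 : ℂ) ^ (N - j) *
    ((N.factorial : ℂ) / ((j.factorial : ℂ) * ((2 * N - 2 * j + 1).factorial : ℂ))) *
    ∏ k ∈ Finset.Ico j N, (2 * l - 4 * (N : ℂ) + 2 * (k : ℂ) + (n : ℂ) - 1)

noncomputable def bCZ (n M : ℕ) (j : ℤ) (l : ℂ) : ℂ :=
  if 0 ≤ j ∧ j ≤ (M : ℤ) then bC n M j.toNat l else 0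

noncomputable def alphaC (n N i : ℕ) (l : ℂ) : ℂ :=
  (-1 : ℂ) ^ i * 2 ^ N * ((N.factorial : ℂ) / ((2 * N).factorial : ℂ)) * (N.choose i : ℂ) *
    (∏ k ∈ Finset.Icc (i + 1) N, (2 * l + (n : ℂ) - 2 * (k : ℂ))) *
    ∏ k ∈ Finset.Icc 1 i, (2 * l + (n : ℂ) - 2 * (k : ℂ) - 2 * (N : ℂ) + 1)

noncomputable def betaC (n N i : ℕ) (l : ℂ) : ℂ :=
  (-1 : ℂ) ^ i * 2 ^ N * ((N.factorial : ℂ) / ((2 * N + 1).factorial : ℂ)) * (N.choose i : ℂ) *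
    (∏ k ∈ Finset.Icc (i + 1) N, (2 * l + (n : ℂ) - 2 * (k : ℂ))) *
    ∏ k ∈ Finset.Icc 1 i, (2 * l + (n : ℂ) - 2 * (k : ℂ) - 2 * (N : ℂ) - 1)

noncomputable def gammaC (n N i : ℕ) (l p : ℂ) : ℂ :=
  (-1 : ℂ) ^ i * 2 ^ N *
    ((N.factorial : ℂ) / (((N : ℂ) + 1) * ((2 * N + 1).factorial : ℂ))) *
    ((N + 1).choose i : ℂ) *
    ((l + p - 2 * (N : ℂ) - 1) * ((N : ℂ) + 1) * (2 * l + (n : ℂ) - 2 * (i : ℂ)) +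
      (l + (n : ℂ) - p) * (2 * (N : ℂ) + 1) * ((N : ℂ) - (i : ℂ) + 1)) *
    (∏ k ∈ Finset.Icc (i + 1) N, (2 * l + (n : ℂ) - 2 * (k : ℂ))) *
    ∏ k ∈ Finset.Icc 1 (i - 1), (2 * l + (n : ℂ) - 2 * (k : ℂ) - 2 * (N : ℂ) - 1)

noncomputable def poch (a : ℂ) (l : ℕ) : ℂ :=
  ∏ m ∈ Finset.range l, (a + (m : ℂ))

lemma oddprodC (a t : ℕ) :
    (∏ j ∈ Finset.range t, (2*(a:ℂ)+1+2*(j:ℂ))) * ((2:ℂ)^t * ((a+t).factorial : ℂ) * ((2*a).factorial : ℂ))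
      = ((2*a+2*t).factorial : ℂ) * (a.factorial : ℂ) := by
  induction t with
  | zero => simp; ring
  | succ t ih =>
    rw [Finset.prod_range_succ]
    have h1 : (2*a+2*(t+1)).factorial = (2*a+2*t+2) * ((2*a+2*t+1) * (2*a+2*t).factorial) := by
      rw [show 2*a+2*(t+1) = (2*a+2*t+1)+1 by ring, Nat.factorial_succ,
        show 2*a+2*t+1 = (2*a+2*t)+1 from rfl, Nat.factorial_succ]
    have h2 : (a+(t+1)).factorial = (a+t+1) * (a+t).factorial := by
      rw [show a+(t+1) = (a+t)+1 by ring, Nat.factorial_succ]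
    rw [h1, h2]
    push_cast
    linear_combination (2*(a:ℂ)+2*(t:ℂ)+1) * 2 * ((a:ℂ)+(t:ℂ)+1) * ih

lemma evenprodC (a i : ℕ) (h : i ≤ a) :
    (∏ j ∈ Finset.range i, (2*(a:ℂ) - 2*(j:ℂ))) * ((a-i).factorial : ℂ)
      = (2:ℂ)^i * (a.factorial : ℂ) := by
  induction i with
  | zero => simp
  | succ i ih =>
    have hia : i ≤ a := le_of_lt h
    rw [Finset.prod_range_succ]
    have h1 : (a-i).factorial = (a-i) * (a-(i+1)).factorial := by
      rw [show a-i = (a-(i+1))+1 by omega, Nat.factorial_succ]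
    have ih' := ih hia
    rw [h1] at ih'
    have hcast : ((a-i : ℕ) : ℂ) = (a:ℂ) - (i:ℂ) := by
      push_cast [Nat.cast_sub hia]; ring
    push_cast [hcast] at ih' ⊢
    linear_combination 2*ih'

lemma prodIcc_reflect (c : ℂ) (i B : ℕ) (hiB : i ≤ B) :
    ∏ j ∈ Finset.Icc (i+1) B, (c - 2*(j:ℂ))
      = ∏ j ∈ Finset.range (B-i), (c - 2*(B:ℂ) + 2*(j:ℂ)) := by
  apply Finset.prod_bij' (fun j _ => B - j) (fun j _ => B - j)
  · intro a ha; simp only [Finset.mem_Icc] at ha; simp only [Finset.mem_range]; omega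
  · intro a ha; simp only [Finset.mem_range] at ha; simp only [Finset.mem_Icc]; omega
  · intro a ha; simp only [Finset.mem_Icc] at ha; omega
  · intro a ha; simp only [Finset.mem_range] at ha; omega
  · intro a ha; simp only [Finset.mem_Icc] at ha
    have : ((B - a : ℕ) : ℂ) = (B:ℂ) - (a:ℂ) := by
      push_cast [Nat.cast_sub ha.2]; ring
    rw [this]; ring

lemma prodIcc_shift (c : ℂ) (i : ℕ) :
    ∏ j ∈ Finset.Icc 1 i, (c - 2*(j:ℂ))
      = ∏ j ∈ Finset.range i, (c - 2 - 2*(j:ℂ)) := by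
  rw [show Finset.Icc 1 i = Finset.Ico 1 (i+1) by rfl, Finset.prod_Ico_eq_prod_range]
  simp only [Nat.add_sub_cancel]
  exact Finset.prod_congr rfl fun j _ => by push_cast; ring

lemma alphaC_eq (n B i : ℕ) (hiB : i ≤ B) (l : ℂ) :
    alphaC n B i l
      = (-1:ℂ)^i * 2^B * ((B.factorial : ℂ)/((2*B).factorial : ℂ)) * (B.choose i : ℂ) *
        (∏ j ∈ Finset.range (B-i), (2*l + (n:ℂ) - 2*(B:ℂ) + 2*(j:ℂ))) *
        (∏ j ∈ Finset.range i, (2*l + (n:ℂ) - 2*(B:ℂ) - 1 - 2*(j:ℂ))) := by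
  unfold alphaC
  rw [prodIcc_reflect (2*l + (n:ℂ)) i B hiB]
  rw [show (∏ j ∈ Finset.Icc 1 i, (2*l + (n:ℂ) - 2*(j:ℂ) - 2*(B:ℂ) + 1))
      = ∏ j ∈ Finset.Icc 1 i, ((2*l + (n:ℂ) - 2*(B:ℂ) + 1) - 2*(j:ℂ)) from
    Finset.prod_congr rfl fun j _ => by ring]
  rw [prodIcc_shift]
  congr 1
  exact Finset.prod_congr rfl fun j _ => by ring

set_option maxHeartbeats 2000000 in
theorem alpha_main_factorization_second (n : ℕ) (hn : 2 ≤ n) (N k : ℕ) (hN : 1 ≤ N)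
    (hk1 : 1 ≤ k) (hkN : k ≤ N) (i : ℕ) (hi : i ≤ N) :
    (N - k < i → alphaC n N i (2 * (N : ℂ) - (k : ℂ) - ((n : ℂ) - 1) / 2) = 0) ∧
    (i ≤ N - k → alphaC n N i (2 * (N : ℂ) - (k : ℂ) - ((n : ℂ) - 1) / 2)
        = alphaC n (N - k) i (2 * (N : ℂ) - (k : ℂ) - ((n : ℂ) - 1) / 2)) := by
  constructor
  · intro h1
    unfold alphaC
    have hz : (∏ j ∈ Finset.Icc 1 i,
        (2 * (2 * (N : ℂ) - (k : ℂ) - ((n : ℂ) - 1) / 2) + (n : ℂ) - 2*(j:ℂ) - 2*(N:ℂ) + 1)) = 0 := by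
      apply Finset.prod_eq_zero (i := N - k + 1)
      · simp only [Finset.mem_Icc]; omega
      · push_cast [Nat.cast_sub hkN]; ring
    rw [hz, mul_zero]
  · intro h2
    obtain ⟨d, rfl⟩ : ∃ d, N = i + d + k := ⟨N - k - i, by omega⟩
    rw [show i + d + k - k = i + d by omega]
    rw [alphaC_eq n (i+d+k) i (by omega), alphaC_eq n (i+d) i (by omega)]
    rw [show i + d + k - i = d + k by omega, show i + d - i = d by omega]
    rw [show (∏ j ∈ Finset.range (d+k),
        (2 * (2 * ((i+d+k : ℕ) : ℂ) - (k : ℂ) - ((n : ℂ) - 1) / 2) + (n:ℂ) - 2*((i+d+k : ℕ):ℂ) + 2*(j:ℂ)))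
        = ∏ j ∈ Finset.range (d+k), (2*(((i+d : ℕ)):ℂ)+1+2*(j:ℂ)) from
      Finset.prod_congr rfl fun j _ => by push_cast; ring]
    rw [show (∏ j ∈ Finset.range i,
        (2 * (2 * ((i+d+k : ℕ) : ℂ) - (k : ℂ) - ((n : ℂ) - 1) / 2) + (n:ℂ) - 2*((i+d+k : ℕ):ℂ) - 1 - 2*(j:ℂ)))
        = ∏ j ∈ Finset.range i, (2*(((i+d : ℕ)):ℂ) - 2*(j:ℂ)) from
      Finset.prod_congr rfl fun j _ => by push_cast; ring]
    rw [show (∏ j ∈ Finset.range d,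
        (2 * (2 * ((i+d+k : ℕ) : ℂ) - (k : ℂ) - ((n : ℂ) - 1) / 2) + (n:ℂ) - 2*((i+d : ℕ):ℂ) + 2*(j:ℂ)))
        = ∏ j ∈ Finset.range d, (2*(((i+d+k : ℕ)):ℂ)+1+2*(j:ℂ)) from
      Finset.prod_congr rfl fun j _ => by push_cast; ring]
    rw [show (∏ j ∈ Finset.range i,
        (2 * (2 * ((i+d+k : ℕ) : ℂ) - (k : ℂ) - ((n : ℂ) - 1) / 2) + (n:ℂ) - 2*((i+d : ℕ):ℂ) - 1 - 2*(j:ℂ)))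
        = ∏ j ∈ Finset.range i, (2*(((i+d+k : ℕ)):ℂ) - 2*(j:ℂ)) from
      Finset.prod_congr rfl fun j _ => by push_cast; ring]
    have fne : ∀ m : ℕ, ((m.factorial : ℂ)) ≠ 0 :=
      fun m => Nat.cast_ne_zero.mpr (Nat.factorial_ne_zero m)
    have two_ne : ∀ t : ℕ, ((2:ℂ)^t) ≠ 0 := fun t => pow_ne_zero t two_ne_zero
    have O1 := oddprodC (i+d) (d+k)
    have O2 := oddprodC (i+d+k) d
    have E1 := evenprodC (i+d) i (by omega)
    have E2 := evenprodC (i+d+k) i (by omega)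
    rw [show 2*(i+d)+2*(d+k) = 2*(i+d+k)+2*d by ring, show (i+d)+(d+k) = (i+d+k)+d by ring] at O1
    have O1' : (∏ j ∈ Finset.range (d+k), (2*(((i+d : ℕ)):ℂ)+1+2*(j:ℂ)))
        = (((2*(i+d+k)+2*d).factorial : ℂ) * ((i+d).factorial : ℂ))
          / ((2:ℂ)^(d+k) * (((i+d+k)+d).factorial : ℂ) * ((2*(i+d)).factorial : ℂ)) := by
      rw [eq_div_iff (by exact mul_ne_zero (mul_ne_zero (two_ne _) (fne _)) (fne _))]
      linear_combination O1
    have O2' : (∏ j ∈ Finset.range d, (2*(((i+d+k : ℕ)):ℂ)+1+2*(j:ℂ)))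
        = (((2*(i+d+k)+2*d).factorial : ℂ) * ((i+d+k).factorial : ℂ))
          / ((2:ℂ)^d * (((i+d+k)+d).factorial : ℂ) * ((2*(i+d+k)).factorial : ℂ)) := by
      rw [eq_div_iff (by exact mul_ne_zero (mul_ne_zero (two_ne _) (fne _)) (fne _))]
      linear_combination O2
    have E1' : (∏ j ∈ Finset.range i, (2*(((i+d : ℕ)):ℂ) - 2*(j:ℂ)))
        = ((2:ℂ)^i * ((i+d).factorial : ℂ)) / (((i+d-i).factorial : ℂ)) := by
      rw [eq_div_iff (fne _)]; linear_combination E1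
    have E2' : (∏ j ∈ Finset.range i, (2*(((i+d+k : ℕ)):ℂ) - 2*(j:ℂ)))
        = ((2:ℂ)^i * ((i+d+k).factorial : ℂ)) / (((i+d+k-i).factorial : ℂ)) := by
      rw [eq_div_iff (fne _)]; linear_combination E2
    rw [O1', O2', E1', E2',
      Nat.cast_choose ℂ (show i ≤ i+d+k by omega), Nat.cast_choose ℂ (show i ≤ i+d by omega),
      show i+d+k-i = d+k by omega, show i+d-i = d by omega]
    field_simp
    ring_nf
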